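/- Let F be an ordered field and v_0, ..., v_n, w ∈ F^n in general position. Then ∑_{i=0}^{n} (-1)^i c(v_0, ..., v̂_i, ..., v_n)(w) = d(v_0, ..., v_n), where c(u_1,...,u_n)(w) = sign det(u_1,...,u_n) if all dual-basis coordinates of w with respect to the basis u_1,...,u_n are positive, and 0 otherwise. -/

import Mathlib

open Matrix
open scoped BigOperators

/-- A family of vectors in `F^n` is *in general position* if every subset with
at most `n` elements is linearly independent. -/
def GenPos {F : Type*} [Field F] {n m : ℕ} (v : Fin m → (Fin n → F)) : Prop :=
  ∀ s : Finset (Fin m), s.card ≤ n → LinearIndependent F (fun i : s => v i.1)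

/-- The sign of an element of an ordered field. -/
def sgn {F : Type*} [Field F] [LinearOrder F] [IsStrictOrderedRing F] (x : F) : ℤ :=
  if 0 < x then 1 else if x < 0 then -1 else 0

open Classical in
/-- The function `d` of the Shintani cocycle construction: for `v_0, ..., v_n` in
general position in `F^n`, it equals `(-1)^i sgn det(v_0,...,v̂_i,...,v_n)` (computed
here with `i = 0`) if the coefficients of the linear relation among the `v_j` all have
the same sign, and `0` otherwise. -/
noncomputable def dFun {F : Type*} [Field F] [LinearOrder F] [IsStrictOrderedRing F] {n : ℕ}
    (v : Fin (n + 1) → (Fin n → F)) : ℤ :=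
  if ∃ lam : Fin (n + 1) → F, (∀ i, lam i ≠ 0) ∧ (∑ i, lam i • v i) = 0 ∧
      ((∀ i, 0 < lam i) ∨ (∀ i, lam i < 0))
  then sgn (Matrix.of (fun r (j : Fin n) => v j.succ r)).det
  else 0

open Classical in
/-- The signed characteristic function of the open cone spanned by the basis
`v_1, ..., v_n`:  `c(v_1,...,v_n)(w) = sgn det(v_1,...,v_n)` if all coordinates of `w`
with respect to the basis (i.e. the values of the dual basis at `w`) are positive,
and `0` otherwise. -/
noncomputable def cFun {F : Type*} [Field F] [LinearOrder F] [IsStrictOrderedRing F] {n : ℕ}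
    (v : Fin n → (Fin n → F)) (w : Fin n → F) : ℤ :=
  let M : Matrix (Fin n) (Fin n) F := Matrix.of fun r j => v j r
  if ∀ i, 0 < (M⁻¹ *ᵥ w) i then sgn M.det else 0

section sgnLemmas
variable {F : Type*} [Field F] [LinearOrder F] [IsStrictOrderedRing F]

lemma sgn_of_pos {x : F} (h : 0 < x) : sgn x = 1 := if_pos h

lemma sgn_of_neg {x : F} (h : x < 0) : sgn x = -1 := by
  rw [sgn, if_neg (asymm h), if_pos h]

lemma sgn_zero : sgn (0 : F) = 0 := by rw [sgn, if_neg (lt_irrefl _), if_neg (lt_irrefl _)]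

lemma sgn_one : sgn (1 : F) = 1 := sgn_of_pos one_pos

lemma sgn_mul (a b : F) : sgn (a * b) = sgn a * sgn b := by
  rcases lt_trichotomy a 0 with ha | rfl | ha
  · rcases lt_trichotomy b 0 with hb | rfl | hb
    · rw [sgn_of_pos (mul_pos_of_neg_of_neg ha hb), sgn_of_neg ha, sgn_of_neg hb]; norm_num
    · rw [mul_zero]; simp [sgn_zero]
    · rw [sgn_of_neg (mul_neg_of_neg_of_pos ha hb), sgn_of_neg ha, sgn_of_pos hb]; norm_num
  · rw [zero_mul]; simp [sgn_zero]
  · rcases lt_trichotomy b 0 with hb | rfl | hb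
    · rw [sgn_of_neg (mul_neg_of_pos_of_neg ha hb), sgn_of_pos ha, sgn_of_neg hb]; norm_num
    · rw [mul_zero]; simp [sgn_zero]
    · rw [sgn_of_pos (mul_pos ha hb), sgn_of_pos ha, sgn_of_pos hb]; norm_num

lemma sgn_neg_one_pow (k : ℕ) : sgn ((-1 : F) ^ k) = (-1 : ℤ) ^ k := by
  rcases Nat.even_or_odd k with h | h
  · rw [h.neg_one_pow, h.neg_one_pow, sgn_one]
  · rw [h.neg_one_pow, h.neg_one_pow, sgn_of_neg (by norm_num)]

end sgnLemmas

open Finset in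
lemma core {F : Type*} [Field F] [LinearOrder F] [IsStrictOrderedRing F] {n : ℕ} (x y : Fin n → F)
    (hx : ∀ i, x i ≠ 0) (hy : ∀ i, y i ≠ 0)
    (hd : ∀ i j : Fin n, i ≠ j → y i / x i ≠ y j / x j) :
    ((if ∀ r, 0 < y r then (1 : ℤ) else 0)
      - ∑ i, sgn (x i) *
          (if (0 < y i / x i ∧ ∀ r, r ≠ i → 0 < y r - y i / x i * x r) then (1 : ℤ) else 0))
      = (if ∀ i, x i < 0 then 1 else 0) := by
  have ha0 : ∀ i, y i / x i ≠ 0 := fun i => div_ne_zero (hy i) (hx i)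
  have key : ∀ i r : Fin n, r ≠ i →
      (0 < y r - y i / x i * x r ↔
        ((0 < x r ∧ y i / x i < y r / x r) ∨ (x r < 0 ∧ y r / x r < y i / x i))) := by
    intro i r hr
    have hyr : y r = y r / x r * x r := (div_mul_cancel₀ (y r) (hx r)).symm
    rw [show y r - y i / x i * x r = (y r / x r - y i / x i) * x r by rw [sub_mul, ← hyr]]
    rw [mul_pos_iff, sub_pos, sub_neg]
    tauto
  have keyY : ∀ r : Fin n,
      (0 < y r ↔ ((0 < x r ∧ 0 < y r / x r) ∨ (x r < 0 ∧ y r / x r < 0))) := by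
    intro r
    have hyr : y r = y r / x r * x r := (div_mul_cancel₀ (y r) (hx r)).symm
    conv_lhs => rw [hyr]
    rw [mul_pos_iff]
    tauto
  by_cases hP : ∃ i, 0 < x i
  · obtain ⟨p, hp⟩ := hP
    rw [if_neg (show ¬ ∀ i, x i < 0 from fun h => absurd (h p) (asymm hp))]
    obtain ⟨i1, hi1mem, hi1min⟩ :=
      Finset.exists_min_image (univ.filter fun i => 0 < x i) (fun i => y i / x i)
        ⟨p, by simp [hp]⟩
    have hxi1 : 0 < x i1 := by simpa using (Finset.mem_filter.mp hi1mem).2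
    have hi1min' : ∀ r, 0 < x r → y i1 / x i1 ≤ y r / x r := fun r hr =>
      hi1min r (by simp [hr])
    by_cases hN : ∃ j, x j < 0
    · obtain ⟨q, hq⟩ := hN
      obtain ⟨j1, hj1mem, hj1max⟩ :=
        Finset.exists_max_image (univ.filter fun j => x j < 0) (fun i => y i / x i)
          ⟨q, by simp [hq]⟩
      have hxj1 : x j1 < 0 := by simpa using (Finset.mem_filter.mp hj1mem).2
      have hj1max' : ∀ r, x r < 0 → y r / x r ≤ y j1 / x j1 := fun r hr =>
        hj1max r (by simp [hr])
      have hne : i1 ≠ j1 := fun h => by rw [h] at hxi1; linarith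
      have hTi1 : (0 < y i1 / x i1 ∧ ∀ r, r ≠ i1 → 0 < y r - y i1 / x i1 * x r) ↔
          (0 < y i1 / x i1 ∧ y j1 / x j1 < y i1 / x i1) := by
        constructor
        · rintro ⟨h1, h2⟩
          refine ⟨h1, ?_⟩
          rcases (key i1 j1 (Ne.symm hne)).mp (h2 j1 (Ne.symm hne)) with ⟨h3, _⟩ | ⟨_, h3⟩
          · linarith
          · exact h3
        · rintro ⟨h1, h2⟩
          refine ⟨h1, fun r hr => (key i1 r hr).mpr ?_⟩
          rcases (hx r).lt_or_gt with h3 | h3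
          · exact Or.inr ⟨h3, lt_of_le_of_lt (hj1max' r h3) h2⟩
          · exact Or.inl ⟨h3, lt_of_le_of_ne (hi1min' r h3) (Ne.symm (hd r i1 hr))⟩
      have hTj1 : (0 < y j1 / x j1 ∧ ∀ r, r ≠ j1 → 0 < y r - y j1 / x j1 * x r) ↔
          (0 < y j1 / x j1 ∧ y j1 / x j1 < y i1 / x i1) := by
        constructor
        · rintro ⟨h1, h2⟩
          refine ⟨h1, ?_⟩
          rcases (key j1 i1 hne).mp (h2 i1 hne) with ⟨_, h3⟩ | ⟨h3, _⟩
          · exact h3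
          · linarith
        · rintro ⟨h1, h2⟩
          refine ⟨h1, fun r hr => (key j1 r hr).mpr ?_⟩
          rcases (hx r).lt_or_gt with h3 | h3
          · exact Or.inr ⟨h3, lt_of_le_of_ne (hj1max' r h3) (hd r j1 hr)⟩
          · exact Or.inl ⟨h3, lt_of_lt_of_le h2 (hi1min' r h3)⟩
      have hT0 : ∀ i, i ≠ i1 → i ≠ j1 →
          ¬(0 < y i / x i ∧ ∀ r, r ≠ i → 0 < y r - y i / x i * x r) := by
        rintro i h1 h2 ⟨_, hT⟩
        rcases (hx i).lt_or_gt with h3 | h3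
        · rcases (key i j1 (fun h => h2 h.symm)).mp (hT j1 (fun h => h2 h.symm)) with
            ⟨h4, _⟩ | ⟨_, h4⟩
          · linarith
          · have := hj1max' i h3; linarith
        · rcases (key i i1 (fun h => h1 h.symm)).mp (hT i1 (fun h => h1 h.symm)) with
            ⟨_, h4⟩ | ⟨h4, _⟩
          · have := hi1min' i h3; linarith
          · linarith
      have hsum : (∑ i, sgn (x i) *
            (if (0 < y i / x i ∧ ∀ r, r ≠ i → 0 < y r - y i / x i * x r) then (1 : ℤ) else 0))
          = (if (0 < y i1 / x i1 ∧ y j1 / x j1 < y i1 / x i1) then (1 : ℤ) else 0)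
            + (-(if (0 < y j1 / x j1 ∧ y j1 / x j1 < y i1 / x i1) then (1 : ℤ) else 0)) := by
        have hterm : ∀ i ∈ univ, sgn (x i) *
            (if (0 < y i / x i ∧ ∀ r, r ≠ i → 0 < y r - y i / x i * x r) then (1 : ℤ) else 0)
            = (if i = i1 then
                (if (0 < y i1 / x i1 ∧ y j1 / x j1 < y i1 / x i1) then (1 : ℤ) else 0) else 0)
              + (if i = j1 then
                (-(if (0 < y j1 / x j1 ∧ y j1 / x j1 < y i1 / x i1) then (1 : ℤ) else 0)) else 0) := by
          intro i _
          by_cases hi : i = i1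
          · subst hi
            rw [if_pos rfl, if_neg hne, sgn_of_pos hxi1, if_congr hTi1 rfl rfl]
            ring
          · by_cases hj : i = j1
            · subst hj
              rw [if_neg hi, if_pos rfl, sgn_of_neg hxj1, if_congr hTj1 rfl rfl]
              ring
            · rw [if_neg hi, if_neg hj, if_neg (hT0 i hi hj)]
              ring
        rw [Finset.sum_congr rfl hterm, Finset.sum_add_distrib,
          Finset.sum_ite_eq' univ i1, Finset.sum_ite_eq' univ j1,
          if_pos (mem_univ i1), if_pos (mem_univ j1)]
      have hY : (∀ r, 0 < y r) ↔ (0 < y i1 / x i1 ∧ y j1 / x j1 < 0) := by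
        constructor
        · intro h
          constructor
          · rcases (keyY i1).mp (h i1) with ⟨_, h4⟩ | ⟨h4, _⟩
            · exact h4
            · linarith
          · rcases (keyY j1).mp (h j1) with ⟨h4, _⟩ | ⟨_, h4⟩
            · linarith
            · exact h4
        · rintro ⟨h1, h2⟩ r
          rcases (hx r).lt_or_gt with h3 | h3
          · exact (keyY r).mpr (Or.inr ⟨h3, lt_of_le_of_lt (hj1max' r h3) h2⟩)
          · exact (keyY r).mpr (Or.inl ⟨h3, lt_of_lt_of_le h1 (hi1min' r h3)⟩)
      rw [hsum, if_congr hY rfl rfl]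
      by_cases hA : 0 < y i1 / x i1
      · by_cases hB : 0 < y j1 / x j1
        · rw [if_neg (fun h => absurd h.2 (asymm hB)),
            if_congr (and_iff_right hA) rfl rfl, if_congr (and_iff_right hB) rfl rfl]
          ring
        · have hB' : y j1 / x j1 < 0 := ((ha0 j1).lt_or_gt).resolve_right hB
          rw [if_pos ⟨hA, hB'⟩, if_pos ⟨hA, lt_trans hB' hA⟩,
            if_neg (fun h => hB h.1)]
          ring
      · have hA' : y i1 / x i1 < 0 := ((ha0 i1).lt_or_gt).resolve_right hA
        rw [if_neg (fun h => hA h.1), if_neg (fun h => hA h.1),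
          if_neg (fun h => asymm (lt_trans h.2 hA') h.1)]
        ring
    · have hxall : ∀ j, 0 < x j := fun j => ((hx j).lt_or_gt).resolve_left (fun h => hN ⟨j, h⟩)
      have hTi1 : (0 < y i1 / x i1 ∧ ∀ r, r ≠ i1 → 0 < y r - y i1 / x i1 * x r) ↔
          (0 < y i1 / x i1) := by
        constructor
        · exact fun h => h.1
        · intro h1
          refine ⟨h1, fun r hr => (key i1 r hr).mpr ?_⟩
          exact Or.inl ⟨hxall r, lt_of_le_of_ne (hi1min' r (hxall r)) (Ne.symm (hd r i1 hr))⟩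
      have hT0 : ∀ i, i ≠ i1 →
          ¬(0 < y i / x i ∧ ∀ r, r ≠ i → 0 < y r - y i / x i * x r) := by
        rintro i h1 ⟨_, hT⟩
        rcases (key i i1 (fun h => h1 h.symm)).mp (hT i1 (fun h => h1 h.symm)) with
          ⟨_, h4⟩ | ⟨h4, _⟩
        · have := hi1min' i (hxall i); linarith
        · linarith [hxall i1]
      have hsum : (∑ i, sgn (x i) *
            (if (0 < y i / x i ∧ ∀ r, r ≠ i → 0 < y r - y i / x i * x r) then (1 : ℤ) else 0))
          = (if 0 < y i1 / x i1 then (1 : ℤ) else 0) := by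
        have hterm : ∀ i ∈ univ, sgn (x i) *
            (if (0 < y i / x i ∧ ∀ r, r ≠ i → 0 < y r - y i / x i * x r) then (1 : ℤ) else 0)
            = (if i = i1 then (if 0 < y i1 / x i1 then (1 : ℤ) else 0) else 0) := by
          intro i _
          by_cases hi : i = i1
          · subst hi
            rw [if_pos rfl, sgn_of_pos (hxall i), if_congr hTi1 rfl rfl]
            ring
          · rw [if_neg hi, if_neg (hT0 i hi)]; ring
        rw [Finset.sum_congr rfl hterm, Finset.sum_ite_eq' univ i1, if_pos (mem_univ i1)]
      have hY : (∀ r, 0 < y r) ↔ (0 < y i1 / x i1) := by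
        constructor
        · intro h
          rcases (keyY i1).mp (h i1) with ⟨_, h4⟩ | ⟨h4, _⟩
          · exact h4
          · linarith [hxall i1]
        · intro h1 r
          exact (keyY r).mpr (Or.inl ⟨hxall r, lt_of_lt_of_le h1 (hi1min' r (hxall r))⟩)
      rw [hsum, if_congr hY rfl rfl]
      ring
  · have hxall : ∀ j, x j < 0 := fun j => ((hx j).lt_or_gt).resolve_right (fun h => hP ⟨j, h⟩)
    rw [if_pos hxall]
    rcases isEmpty_or_nonempty (Fin n) with hE | hE
    · rw [Finset.univ_eq_empty, Finset.sum_empty, if_pos (fun r => (hE.false r).elim)]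
      ring
    · obtain ⟨j1, _, hj1max⟩ :=
        Finset.exists_max_image univ (fun i => y i / x i) univ_nonempty
      have hj1max' : ∀ r, y r / x r ≤ y j1 / x j1 := fun r => hj1max r (mem_univ r)
      have hTj1 : (0 < y j1 / x j1 ∧ ∀ r, r ≠ j1 → 0 < y r - y j1 / x j1 * x r) ↔
          (0 < y j1 / x j1) := by
        constructor
        · exact fun h => h.1
        · intro h1
          refine ⟨h1, fun r hr => (key j1 r hr).mpr ?_⟩
          exact Or.inr ⟨hxall r, lt_of_le_of_ne (hj1max' r) (hd r j1 hr)⟩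
      have hT0 : ∀ i, i ≠ j1 →
          ¬(0 < y i / x i ∧ ∀ r, r ≠ i → 0 < y r - y i / x i * x r) := by
        rintro i h1 ⟨_, hT⟩
        rcases (key i j1 (fun h => h1 h.symm)).mp (hT j1 (fun h => h1 h.symm)) with
          ⟨h4, _⟩ | ⟨_, h4⟩
        · linarith [hxall j1]
        · have := hj1max' i; linarith
      have hsum : (∑ i, sgn (x i) *
            (if (0 < y i / x i ∧ ∀ r, r ≠ i → 0 < y r - y i / x i * x r) then (1 : ℤ) else 0))
          = -(if 0 < y j1 / x j1 then (1 : ℤ) else 0) := by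
        have hterm : ∀ i ∈ univ, sgn (x i) *
            (if (0 < y i / x i ∧ ∀ r, r ≠ i → 0 < y r - y i / x i * x r) then (1 : ℤ) else 0)
            = (if i = j1 then (-(if 0 < y j1 / x j1 then (1 : ℤ) else 0)) else 0) := by
          intro i _
          by_cases hi : i = j1
          · subst hi
            rw [if_pos rfl, sgn_of_neg (hxall i), if_congr hTj1 rfl rfl]
            ring
          · rw [if_neg hi, if_neg (hT0 i hi)]; ring
        rw [Finset.sum_congr rfl hterm, Finset.sum_ite_eq' univ j1, if_pos (mem_univ j1)]
      have hY : (∀ r, 0 < y r) ↔ (y j1 / x j1 < 0) := by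
        constructor
        · intro h
          rcases (keyY j1).mp (h j1) with ⟨h4, _⟩ | ⟨_, h4⟩
          · linarith [hxall j1]
          · exact h4
        · intro h1 r
          exact (keyY r).mpr (Or.inr ⟨hxall r, lt_of_le_of_lt (hj1max' r) h1⟩)
      rw [hsum, if_congr hY rfl rfl]
      rcases (ha0 j1).lt_or_gt with h | h
      · rw [if_pos h, if_neg (asymm h)]; ring
      · rw [if_neg (asymm h), if_pos h]; ring

lemma cterm {F : Type*} [Field F] [LinearOrder F] [IsStrictOrderedRing F] {n : ℕ} (v : Fin (n+1) → Fin n → F) (w : Fin n → F)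
    (x y : Fin n → F)
    (hdet : (Matrix.of fun r (j : Fin n) => v (Fin.succ j) r).det ≠ 0)
    (hv0 : v 0 = (Matrix.of fun r (j : Fin n) => v (Fin.succ j) r) *ᵥ x)
    (hw : w = (Matrix.of fun r (j : Fin n) => v (Fin.succ j) r) *ᵥ y)
    (i : Fin n) (hxi : x i ≠ 0) :
    cFun (fun k => v ((Fin.succ i).succAbove k)) w
      = (-1 : ℤ) ^ (i : ℕ) * sgn ((Matrix.of fun r (j : Fin n) => v (Fin.succ j) r).det)
          * sgn (x i) *
        (if (0 < y i / x i ∧ ∀ r, r ≠ i → 0 < y r - y i / x i * x r) then 1 else 0) := by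
  induction n with
  | zero => exact i.elim0
  | succ m _ =>
  set B : Matrix (Fin (m+1)) (Fin (m+1)) F := Matrix.of fun r j => v (Fin.succ j) r with hB
  set C : Matrix (Fin (m+1)) (Fin (m+1)) F :=
    Matrix.of (fun r l => if l = 0 then x r
      else if (Fin.succ i).succAbove l = Fin.succ r then 1 else 0) with hC
  set M : Matrix (Fin (m+1)) (Fin (m+1)) F :=
    Matrix.of (fun r k => v ((Fin.succ i).succAbove k) r) with hM
  have hMC : M = B * C := by
    ext r l
    rw [Matrix.mul_apply]
    by_cases hl : l = 0
    · subst hl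
      have h1 : ∀ k, B r k * C k 0 = v (Fin.succ k) r * x k := fun k => by
        simp [hB, hC]
      rw [Finset.sum_congr rfl fun k _ => h1 k]
      have h0 : (Fin.succ i).succAbove 0 = 0 := Fin.succ_succAbove_zero i
      rw [hM]
      simp only [Matrix.of_apply, h0]
      rw [hv0]
      simp [Matrix.mulVec, dotProduct, hB]
    · have hne0 : (Fin.succ i).succAbove l ≠ 0 :=
        Fin.succAbove_ne_zero (Fin.succ_ne_zero i) hl
      have hk0succ : Fin.succ (((Fin.succ i).succAbove l).pred hne0) = (Fin.succ i).succAbove l :=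
        Fin.succ_pred _ hne0
      rw [Finset.sum_eq_single (((Fin.succ i).succAbove l).pred hne0)]
      · rw [hM]
        simp only [Matrix.of_apply, hB, hC]
        rw [if_neg hl, if_pos hk0succ.symm, mul_one, hk0succ]
      · intro b _ hb
        have : C b l = 0 := by
          rw [hC]
          simp only [Matrix.of_apply]
          rw [if_neg hl, if_neg]
          intro h
          exact hb (by rw [← Fin.succ_inj, hk0succ, h])
        rw [this, mul_zero]
      · intro h
        exact absurd (Finset.mem_univ _) h
  have hdetC : C.det = (-1 : F) ^ (i : ℕ) * x i := by
    rw [Matrix.det_succ_row C i, Finset.sum_eq_single 0]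
    · have hC0 : C i 0 = x i := by simp [hC]
      have hsub : (C.submatrix i.succAbove (Fin.succAbove 0)) = (1 : Matrix (Fin m) (Fin m) F) := by
        ext r l
        simp only [Matrix.submatrix_apply, hC, Matrix.of_apply, Fin.succAbove_zero]
        rw [if_neg (Fin.succ_ne_zero l), Fin.succ_succAbove_succ, Matrix.one_apply]
        by_cases h : r = l
        · subst h; rw [if_pos rfl, if_pos rfl]
        · rw [if_neg (by simpa [Fin.succ_inj, Fin.succAbove_right_inj] using Ne.symm h),
            if_neg h]
      rw [hC0, hsub, Matrix.det_one]
      simp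
    · intro j _ hj
      have : C i j = 0 := by
        rw [hC]
        simp only [Matrix.of_apply]
        rw [if_neg hj, if_neg (Fin.succAbove_ne (Fin.succ i) j)]
      rw [this]; ring
    · intro h
      exact absurd (Finset.mem_univ _) h
  have hdetM : M.det = B.det * ((-1 : F) ^ (i : ℕ) * x i) := by
    rw [hMC, Matrix.det_mul, hdetC]
  have hdetMne : M.det ≠ 0 := by
    rw [hdetM]
    exact mul_ne_zero hdet (mul_ne_zero (pow_ne_zero _ (by norm_num)) hxi)
  set u : Fin (m+1) → F :=
    Fin.cons (y i / x i) (fun l' => y (i.succAbove l') - y i / x i * x (i.succAbove l')) with hu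
  have hCu : C *ᵥ u = y := by
    funext r
    show ∑ l, C r l * u l = y r
    rw [Fin.sum_univ_succ]
    have hC_r0 : C r 0 = x r := by simp [hC]
    have hu0 : u 0 = y i / x i := by rw [hu]; exact Fin.cons_zero _ _
    by_cases hr : r = i
    · subst hr
      have hz : ∀ l' : Fin m, C r (Fin.succ l') * u (Fin.succ l') = 0 := by
        intro l'
        have h1 : C r (Fin.succ l') = 0 := by
          rw [hC]
          simp only [Matrix.of_apply]
          rw [if_neg (Fin.succ_ne_zero l'), Fin.succ_succAbove_succ, if_neg]
          simp [Fin.succ_inj]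
        rw [h1, zero_mul]
      rw [Finset.sum_congr rfl fun l' _ => hz l', Finset.sum_const, smul_zero, add_zero,
        hC_r0, hu0, mul_comm, div_mul_cancel₀ _ hxi]
    · obtain ⟨l0, hl0⟩ := Fin.exists_succAbove_eq (show (r : Fin (m+1)) ≠ i from hr)
      have hsum2 : ∑ l' : Fin m, C r (Fin.succ l') * u (Fin.succ l')
          = y r - y i / x i * x r := by
        rw [Finset.sum_eq_single l0]
        · have h1 : C r (Fin.succ l0) = 1 := by
            rw [hC]
            simp only [Matrix.of_apply]
            rw [if_neg (Fin.succ_ne_zero l0), Fin.succ_succAbove_succ, if_pos (by rw [hl0])]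
          have h2 : u (Fin.succ l0) = y r - y i / x i * x r := by
            rw [hu, Fin.cons_succ, hl0]
          rw [h1, h2, one_mul]
        · intro b _ hb
          have h1 : C r (Fin.succ b) = 0 := by
            rw [hC]
            simp only [Matrix.of_apply]
            rw [if_neg (Fin.succ_ne_zero b), Fin.succ_succAbove_succ, if_neg]
            intro h
            exact hb (Fin.succAbove_right_injective (p := i) (by rw [hl0]; exact Fin.succ_inj.mp h))
          rw [h1, zero_mul]
        · intro h
          exact absurd (Finset.mem_univ _) h
      rw [hsum2, hC_r0, hu0]
      ring
  have hMu : M *ᵥ u = w := by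
    rw [hMC, ← Matrix.mulVec_mulVec, hCu, ← hw]
  have hMdetUnit : IsUnit M.det := isUnit_iff_ne_zero.mpr hdetMne
  have hMinv : M⁻¹ *ᵥ w = u := by
    rw [← hMu, Matrix.mulVec_mulVec, Matrix.nonsing_inv_mul M hMdetUnit, Matrix.one_mulVec]
  have hiff : (∀ l, 0 < u l) ↔
      (0 < y i / x i ∧ ∀ r, r ≠ i → 0 < y r - y i / x i * x r) := by
    constructor
    · intro h
      refine ⟨by simpa [hu] using h 0, fun r hr => ?_⟩
      obtain ⟨l0, hl0⟩ := Fin.exists_succAbove_eq hr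
      have := h (Fin.succ l0)
      rw [hu, Fin.cons_succ, hl0] at this
      exact this
    · rintro ⟨h1, h2⟩ l
      refine Fin.cases ?_ ?_ l
      · simpa [hu] using h1
      · intro l'
        rw [hu, Fin.cons_succ]
        exact h2 _ (Fin.succAbove_ne i l')
  show (if ∀ l, 0 < (M⁻¹ *ᵥ w) l then sgn M.det else 0) = _
  rw [hMinv, if_congr hiff rfl rfl, hdetM, sgn_mul, sgn_mul, sgn_neg_one_pow]
  split_ifs <;> ring

/-- The cocycle relation between `c` and `d`: for `v_0, ..., v_n, w` in general position,
`∑_i (-1)^i c(v_0,...,v̂_i,...,v_n)(w) = d(v_0,...,v_n)`. -/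
theorem stmt8 {F : Type*} [Field F] [LinearOrder F] [IsStrictOrderedRing F] {n : ℕ}
    (v : Fin (n + 1) → (Fin n → F)) (w : Fin n → F)
    (hgp : GenPos (Fin.snoc v w : Fin (n + 2) → Fin n → F)) :
    (∑ i : Fin (n + 1), (-1 : ℤ) ^ (i : ℕ) * cFun (fun k => v (i.succAbove k)) w)
      = dFun v := by
  set B : Matrix (Fin n) (Fin n) F := Matrix.of fun r (j : Fin n) => v (Fin.succ j) r with hB
  have H2 : ∀ c : Fin (n+2) → F,
      (Finset.univ.filter fun k => c k ≠ 0).card ≤ n →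
      (∑ k, c k • (Fin.snoc v w : Fin (n+2) → Fin n → F) k) = 0 → ∀ k, c k = 0 := by
    intro c hcard hsum k
    by_cases hk : c k = 0
    · exact hk
    exfalso
    set s := Finset.univ.filter (fun k : Fin (n+2) => c k ≠ 0) with hs
    have li := hgp s hcard
    have hzero : ∀ kk, kk ∉ s → c kk = 0 := by
      intro kk h
      by_contra h2
      exact h (by simp [hs, h2])
    have hsum' : ∑ i : s, c i.1 • (Fin.snoc v w : Fin (n+2) → Fin n → F) i.1 = 0 := by
      rw [Finset.sum_coe_sort s (fun kk => c kk • (Fin.snoc v w : Fin (n+2) → Fin n → F) kk)]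
      rw [← hsum]
      exact Finset.sum_subset (Finset.subset_univ s)
        (fun kk _ hkk => by rw [hzero kk hkk, zero_smul])
    have := Fintype.linearIndependent_iff.mp li (fun i => c i.1) hsum' ⟨k, by simp [hs, hk]⟩
    exact hk this
  have hsupp : ∀ (c : Fin (n+2) → F) (A Bk : Fin (n+2)), A ≠ Bk → c A = 0 → c Bk = 0 →
      (Finset.univ.filter fun k => c k ≠ 0).card ≤ n := by
    intro c A Bk hAB hA hBk
    have hsub : (Finset.univ.filter fun k => c k ≠ 0) ⊆ Finset.univ \ {A, Bk} := by
      intro k hk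
      rw [Finset.mem_filter] at hk
      rw [Finset.mem_sdiff]
      refine ⟨Finset.mem_univ _, ?_⟩
      rw [Finset.mem_insert, Finset.mem_singleton]
      rintro (rfl | rfl)
      exacts [hk.2 hA, hk.2 hBk]
    have h1 := Finset.card_le_card hsub
    rw [Finset.card_sdiff_of_subset (Finset.subset_univ _), Finset.card_univ, Fintype.card_fin,
      Finset.card_pair hAB] at h1
    omega
  have hBg : ∀ g : Fin n → F, (∑ j, g j • v (Fin.succ j)) = B *ᵥ g := by
    intro g
    funext r
    rw [Finset.sum_apply]
    simp [hB, Matrix.mulVec, dotProduct, mul_comm]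
  have hexp : ∀ (aa : F) (g : Fin n → F) (b : F),
      (∑ k, (Fin.snoc (Fin.cons aa g) b : Fin (n+2) → F) k
          • (Fin.snoc v w : Fin (n+2) → Fin n → F) k)
        = aa • v 0 + (∑ j, g j • v (Fin.succ j)) + b • w := by
    intro aa g b
    rw [Fin.sum_univ_castSucc]
    simp only [Fin.snoc_castSucc, Fin.snoc_last]
    rw [Fin.sum_univ_succ]
    simp only [Fin.cons_zero, Fin.cons_succ]
  have hBdet : B.det ≠ 0 := by
    have hli : LinearIndependent F (fun j : Fin n => v (Fin.succ j)) := by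
      rw [Fintype.linearIndependent_iff]
      intro g hg j
      have h0 := H2 (Fin.snoc (Fin.cons 0 g) 0) ?_ ?_ (Fin.castSucc (Fin.succ j))
      · rw [Fin.snoc_castSucc, Fin.cons_succ] at h0
        exact h0
      · refine hsupp _ 0 (Fin.last (n+1)) ?_ ?_ ?_
        · simp [Fin.ext_iff]
        · rw [show (0 : Fin (n+2)) = Fin.castSucc 0 by simp, Fin.snoc_castSucc]
          exact Fin.cons_zero _ _
        · exact Fin.snoc_last _ _
      · rw [hexp]
        simpa using hg
    have hcols : (fun j : Fin n => Bᵀ j) = fun j : Fin n => v (Fin.succ j) := by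
      funext j r
      rfl
    have hunit : IsUnit B := Matrix.linearIndependent_cols_iff_isUnit.mp (show LinearIndependent F B.col from hli)
    exact isUnit_iff_ne_zero.mp ((Matrix.isUnit_iff_isUnit_det B).mp hunit)
  have hBunit : IsUnit B.det := isUnit_iff_ne_zero.mpr hBdet
  set x : Fin n → F := B⁻¹ *ᵥ v 0 with hxdef
  set y : Fin n → F := B⁻¹ *ᵥ w with hydef
  have hv0 : v 0 = B *ᵥ x := by
    rw [hxdef, Matrix.mulVec_mulVec, Matrix.mul_nonsing_inv B hBunit, Matrix.one_mulVec]
  have hw : w = B *ᵥ y := by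
    rw [hydef, Matrix.mulVec_mulVec, Matrix.mul_nonsing_inv B hBunit, Matrix.one_mulVec]
  have hx : ∀ i, x i ≠ 0 := by
    intro i hxi
    have h0 := H2 (Fin.snoc (Fin.cons 1 (fun j => -x j)) 0) ?_ ?_ 0
    · rw [show (0 : Fin (n+2)) = Fin.castSucc 0 by simp, Fin.snoc_castSucc, Fin.cons_zero] at h0
      exact one_ne_zero h0
    · refine hsupp _ (Fin.castSucc (Fin.succ i)) (Fin.last (n+1)) ?_ ?_ ?_
      · have := i.isLt
        intro h
        rw [Fin.ext_iff, Fin.coe_castSucc, Fin.val_succ, Fin.val_last] at h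
        omega
      · rw [Fin.snoc_castSucc, Fin.cons_succ, hxi, neg_zero]
      · exact Fin.snoc_last _ _
    · rw [hexp, hBg (fun j => -x j),
        show (B *ᵥ fun j => -x j) = -(B *ᵥ x) from Matrix.mulVec_neg x B, ← hv0]
      simp
  have hy : ∀ i, y i ≠ 0 := by
    intro i hyi
    have h0 := H2 (Fin.snoc (Fin.cons 0 y) (-1)) ?_ ?_ (Fin.last (n+1))
    · rw [Fin.snoc_last] at h0
      norm_num at h0
    · refine hsupp _ (Fin.castSucc 0) (Fin.castSucc (Fin.succ i)) ?_ ?_ ?_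
      · simp [Fin.ext_iff]
      · rw [show (Fin.castSucc 0 : Fin (n+2)) = Fin.castSucc 0 from rfl, Fin.snoc_castSucc]
        exact Fin.cons_zero _ _
      · rw [Fin.snoc_castSucc, Fin.cons_succ, hyi]
    · rw [hexp, hBg y, ← hw]
      simp
  have hd : ∀ i j : Fin n, i ≠ j → y i / x i ≠ y j / x j := by
    intro i j hij heq
    have hxyij : y i * x j = y j * x i := (div_eq_div_iff (hx i) (hx j)).mp heq
    set u : Fin n → F := fun k => y i * x k - x i * y k with hu
    have hui : u i = 0 := by rw [hu]; ring
    have huj : u j = 0 := by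
      show y i * x j - x i * y j = 0
      linear_combination hxyij
    have h0 := H2 (Fin.snoc (Fin.cons (y i) (fun k => -u k)) (-(x i))) ?_ ?_ (Fin.castSucc 0)
    · rw [Fin.snoc_castSucc, Fin.cons_zero] at h0
      exact hy i h0
    · refine hsupp _ (Fin.castSucc (Fin.succ i)) (Fin.castSucc (Fin.succ j)) ?_ ?_ ?_
      · simp only [ne_eq, Fin.castSucc_inj, Fin.succ_inj]
        exact hij
      · rw [Fin.snoc_castSucc, Fin.cons_succ, hui, neg_zero]
      · rw [Fin.snoc_castSucc, Fin.cons_succ, huj, neg_zero]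
    · rw [hexp, hBg (fun k => -u k), hv0, hw]
      have hcomb : y i • (B *ᵥ x) + (B *ᵥ fun k => -u k) + (-(x i)) • (B *ᵥ y)
          = B *ᵥ (y i • x + (fun k => -u k) + (-(x i)) • y) := by
        rw [Matrix.mulVec_add, Matrix.mulVec_add, Matrix.mulVec_smul, Matrix.mulVec_smul]
      rw [hcomb, show (y i • x + (fun k => -u k) + (-(x i)) • y) = 0 from ?_, Matrix.mulVec_zero]
      funext k
      simp only [Pi.add_apply, Pi.smul_apply, Pi.zero_apply, smul_eq_mul, hu]
      ring
  have hdval : dFun v = (if (∀ i, x i < 0) then sgn B.det else 0) := by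
    have hiff : (∃ lam : Fin (n+1) → F, (∀ i, lam i ≠ 0) ∧ (∑ i, lam i • v i) = 0 ∧
        ((∀ i, 0 < lam i) ∨ (∀ i, lam i < 0))) ↔ (∀ i, x i < 0) := by
      constructor
      · rintro ⟨lam, hlam0, hlamsum, hlamsign⟩ j
        rw [Fin.sum_univ_succ, hBg (fun j => lam (Fin.succ j)), hv0] at hlamsum
        have hcomb : B *ᵥ (lam 0 • x + fun j => lam (Fin.succ j)) = 0 := by
          rw [Matrix.mulVec_add, Matrix.mulVec_smul]
          exact hlamsum
        have hinj : Function.Injective (B.mulVec) :=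
          Matrix.mulVec_injective_iff_isUnit.mpr ((Matrix.isUnit_iff_isUnit_det B).mpr hBunit)
        have hzero : (lam 0 • x + fun j => lam (Fin.succ j)) = 0 := by
          apply hinj
          rw [hcomb, Matrix.mulVec_zero]
        have hj := congrFun hzero j
        simp only [Pi.add_apply, Pi.smul_apply, smul_eq_mul, Pi.zero_apply] at hj
        rcases hlamsign with hpos | hneg2
        · nlinarith [hpos 0, hpos (Fin.succ j)]
        · nlinarith [hneg2 0, hneg2 (Fin.succ j)]
      · intro hneg
        refine ⟨Fin.cons 1 (fun j => -x j), ?_, ?_, Or.inl ?_⟩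
        · intro i
          refine Fin.cases ?_ ?_ i
          · rw [Fin.cons_zero]; exact one_ne_zero
          · intro j
            rw [Fin.cons_succ]
            exact neg_ne_zero.mpr (hx j)
        · rw [Fin.sum_univ_succ]
          simp only [Fin.cons_zero, Fin.cons_succ]
          rw [hBg (fun j => -x j),
            show (B *ᵥ fun j => -x j) = -(B *ᵥ x) from Matrix.mulVec_neg x B, ← hv0]
          simp
        · intro i
          refine Fin.cases ?_ ?_ i
          · rw [Fin.cons_zero]; exact one_pos
          · intro j
            rw [Fin.cons_succ]
            exact neg_pos.mpr (hneg j)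
    simp only [dFun, hiff]
    rfl
  have hterm0 : cFun (fun k => v ((0 : Fin (n+1)).succAbove k)) w
      = sgn B.det * (if (∀ r, 0 < y r) then 1 else 0) := by
    have hfun : (fun k : Fin n => v ((0 : Fin (n+1)).succAbove k)) = fun k => v (Fin.succ k) := by
      funext k
      rw [Fin.succAbove_zero]
    rw [hfun]
    simp only [cFun]
    rw [← hB, ← hydef]
    split_ifs <;> ring
  have hone : ∀ i : Fin n, ((-1:ℤ)^(i:ℕ)) * ((-1:ℤ)^(i:ℕ)) = 1 := fun i => by
    rw [← pow_add]
    exact Even.neg_one_pow ⟨i, rfl⟩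
  have hterms : ∀ i : Fin n,
      (-1:ℤ) ^ ((Fin.succ i : Fin (n+1)) : ℕ) * cFun (fun k => v ((Fin.succ i).succAbove k)) w
      = -(sgn B.det * (sgn (x i) *
          (if (0 < y i / x i ∧ ∀ r, r ≠ i → 0 < y r - y i / x i * x r) then 1 else 0))) := by
    intro i
    rw [cterm v w x y (by rw [← hB]; exact hBdet) (by rw [← hB]; exact hv0)
      (by rw [← hB]; exact hw) i (hx i), ← hB, Fin.val_succ, pow_succ]
    set T := (if (0 < y i / x i ∧ ∀ r, r ≠ i → 0 < y r - y i / x i * x r) then (1:ℤ) else 0) with hT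
    linear_combination (-(sgn B.det * sgn (x i) * T)) * hone i
  rw [Fin.sum_univ_succ]
  rw [Finset.sum_congr rfl (fun i _ => hterms i), hterm0]
  rw [Finset.sum_neg_distrib, hdval]
  have hcore := core x y hx hy hd
  simp only [Fin.val_zero, pow_zero, one_mul]
  rw [← Finset.mul_sum, ← sub_eq_add_neg, ← mul_sub, hcore]
  split_ifs <;> ring
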